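/- Assume the rotation map σ has no fixed points. Let a : V → ℝ be a nonzero vector and φ a real number with 0 < φ < π such that Σ_{v∈V} A(u,v)·a_v = cos(φ)·a_u for all u ∈ V. Then there exists a nonzero vector Φ ∈ ℂ^(V × {0,…,d−1}) with W Φ = e^{iφ} Φ and ⟨ψ_u, Φ⟩ = a_u for all u ∈ V, and likewise there exists a nonzero vector Φ' with W Φ' = e^{−iφ} Φ' and ⟨ψ_u, Φ'⟩ = a_u for all u ∈ V. -/

import Mathlib

open scoped InnerProductSpace
open Complex

/-- The coin state `ψ_u = (1/√d) Σ_g e_{(u,g)}`. -/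
noncomputable def psiState (V : Type*) [Fintype V] [DecidableEq V] (d : ℕ) (u : V) :
    EuclideanSpace ℂ (V × Fin d) :=
  WithLp.toLp 2 (fun x : V × Fin d => if x.1 = u then ((1 / Real.sqrt d : ℝ) : ℂ) else 0)

/-- The coin operator `C = 2 Σ_u |ψ_u⟩⟨ψ_u| − I` applied to a vector. -/
noncomputable def coinOp {V : Type*} [Fintype V] [DecidableEq V] {d : ℕ}
    (Φ : EuclideanSpace ℂ (V × Fin d)) : EuclideanSpace ℂ (V × Fin d) :=
  (2 : ℂ) • (∑ u : V, ⟪psiState V d u, Φ⟫_ℂ • psiState V d u) - Φ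

/-- The flip-flop walk operator `W = S C`, where `S e_x = e_{σ(x)}`. -/
noncomputable def walkOp {V : Type*} [Fintype V] [DecidableEq V] {d : ℕ}
    (σ : V × Fin d → V × Fin d) (Φ : EuclideanSpace ℂ (V × Fin d)) :
    EuclideanSpace ℂ (V × Fin d) :=
  WithLp.toLp 2 (fun x => coinOp Φ (σ x))

/-- The normalized adjacency matrix entry `A(u,v) = |{g : (σ(u,g)).1 = v}| / d`. -/
noncomputable def adjEntry {V : Type*} [Fintype V] [DecidableEq V] {d : ℕ}
    (σ : V × Fin d → V × Fin d) (u v : V) : ℝ :=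
  (Finset.univ.filter (fun g : Fin d => (σ (u, g)).1 = v)).card / d

private lemma walk_aux1 (r s c A D : ℂ) (hr : r ≠ 0) (hs : s ≠ 0) (hrr : r * r = D) :
    ((1:ℂ)/r) * ((Complex.I/(r*s)) * (D*((c - s*Complex.I)*A) - D*(c*A))) = A := by
  rw [← hrr]; field_simp; ring_nf; simp [Complex.I_sq]

private lemma walk_aux2 (r s c A B : ℂ) (hr : r ≠ 0) (hs : s ≠ 0) (hp : c^2 + s^2 = 1) :
    2*(B/r) - (Complex.I/(r*s))*((c - s*Complex.I)*B - A)
      = (c + s*Complex.I)*((Complex.I/(r*s))*((c - s*Complex.I)*A - B)) := by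
  have h1 : s * s⁻¹ = 1 := mul_inv_cancel₀ hs
  linear_combination (2*B*r⁻¹*s*s⁻¹ + Complex.I*r⁻¹*s⁻¹*A*s^2) * Complex.I_sq
    - 2*B*r⁻¹*h1 - Complex.I*r⁻¹*s⁻¹*A*hp

lemma walk_eig_aux
    {V : Type*} [Fintype V] [DecidableEq V] [Nonempty V] {d : ℕ} (hd : 1 ≤ d)
    (σ : V × Fin d → V × Fin d) (hσ : ∀ x, σ (σ x) = x)
    (a : V → ℝ) (ha : a ≠ 0) (t : ℝ) (ht : Real.sin t ≠ 0)
    (heig : ∀ u : V, ∑ v : V, adjEntry σ u v * a v = Real.cos t * a u) :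
    ∃ Φ : EuclideanSpace ℂ (V × Fin d), Φ ≠ 0 ∧
        walkOp σ Φ = Complex.exp (t * Complex.I) • Φ ∧
        ∀ u : V, ⟪psiState V d u, Φ⟫_ℂ = (a u : ℂ) := by
  have hd0 : (d : ℝ) ≠ 0 := by positivity
  have hs : (Real.sqrt d : ℂ) ≠ 0 := by
    simp only [ne_eq, Complex.ofReal_eq_zero]
    exact Real.sqrt_ne_zero'.2 (by positivity)
  have hss : (Real.sqrt d : ℂ) * (Real.sqrt d : ℂ) = (d : ℂ) := by
    rw [← Complex.ofReal_mul, Real.mul_self_sqrt (by positivity)]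
    norm_num
  have htC : (Real.sin t : ℂ) ≠ 0 := by
    simp only [ne_eq, Complex.ofReal_eq_zero]; exact ht
  set E : ℂ := Complex.exp (-(t * Complex.I)) with hEdef
  have hE : E = (Real.cos t : ℂ) - (Real.sin t : ℂ) * Complex.I := by
    rw [hEdef, ← neg_mul, Complex.exp_mul_I]
    push_cast
    rw [Complex.cos_neg, Complex.sin_neg]
    ring
  have heE : Complex.exp (t * Complex.I)
      = (Real.cos t : ℂ) + (Real.sin t : ℂ) * Complex.I := by
    rw [Complex.exp_mul_I]; push_cast; ring
  have hpyth : (Real.cos t : ℂ) ^ 2 + (Real.sin t : ℂ) ^ 2 = 1 := by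
    rw [← Complex.ofReal_pow, ← Complex.ofReal_pow, ← Complex.ofReal_add,
      ← Complex.ofReal_one]
    norm_cast
    exact Real.cos_sq_add_sin_sq t
  set K : ℂ := Complex.I / (Real.sqrt d * Real.sin t) with hKdef
  have hK : K ≠ 0 := by
    rw [hKdef]
    exact div_ne_zero Complex.I_ne_zero (mul_ne_zero hs htC)
  set Φ : EuclideanSpace ℂ (V × Fin d) :=
    WithLp.toLp 2 (fun x => K * (E * a x.1 - a (σ x).1)) with hΦdef
  have hΦx : ∀ x, Φ x = K * (E * a x.1 - a (σ x).1) := fun x => rfl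
  -- the key fiberwise sum
  have hsum : ∀ u : V, ∑ g : Fin d, (a ((σ (u, g)).1) : ℝ)
      = d * (Real.cos t * a u) := by
    intro u
    have : ∑ g : Fin d, (a ((σ (u, g)).1) : ℝ)
        = ∑ v : V, ∑ g : Fin d, if (σ (u, g)).1 = v then a v else 0 := by
      rw [Finset.sum_comm]
      refine Finset.sum_congr rfl fun g _ => ?_
      simp
    rw [this, ← heig u, Finset.mul_sum]
    refine Finset.sum_congr rfl fun v _ => ?_
    rw [← Finset.sum_filter, Finset.sum_const, nsmul_eq_mul, adjEntry]
    field_simp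
  have hinner : ∀ u : V, ⟪psiState V d u, Φ⟫_ℂ = (a u : ℂ) := by
    intro u
    have h1 : ⟪psiState V d u, Φ⟫_ℂ
        = ∑ x : V × Fin d, (starRingEnd ℂ) (psiState V d u x) * Φ x := by
      simp [PiLp.inner_apply, RCLike.inner_apply]
      exact Finset.sum_congr rfl fun _ _ => mul_comm _ _
    rw [h1]
    have h2 : ∀ x : V × Fin d,
        (starRingEnd ℂ) (psiState V d u x) * Φ x
        = (if x.1 = u then ((1 / Real.sqrt d : ℝ) : ℂ) * Φ x else 0) := by
      intro x
      by_cases h : x.1 = u <;> simp [psiState, h]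
    simp only [h2]
    rw [Fintype.sum_prod_type]
    rw [Finset.sum_eq_single u]
    · simp only [eq_self_iff_true, if_true]
      have : ∑ g : Fin d, ((1 / Real.sqrt d : ℝ) : ℂ) * Φ (u, g)
          = ((1 / Real.sqrt d : ℝ) : ℂ) * ∑ g : Fin d, Φ (u, g) := by
        rw [Finset.mul_sum]
      rw [this]
      have hΦsum : ∑ g : Fin d, Φ (u, g)
          = K * (d * (E * a u) - (d : ℂ) * (Real.cos t * a u)) := by
        simp only [hΦx]
        rw [← Finset.mul_sum]
        congr 1
        rw [Finset.sum_sub_distrib, Finset.sum_const]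
        congr 1
        · simp [mul_comm]
        · exact_mod_cast hsum u
      rw [hΦsum, hKdef, hE, Complex.ofReal_div, Complex.ofReal_one]
      exact walk_aux1 _ _ _ _ _ hs htC hss
    · intro v _ hv
      simp [hv]
    · simp
  refine ⟨Φ, ?_, ?_, hinner⟩
  · -- nonzero
    obtain ⟨u, hu⟩ := Function.ne_iff.mp ha
    intro hΦ0
    have h0 : Φ (u, ⟨0, hd⟩) = 0 := by rw [hΦ0]; rfl
    rw [hΦx] at h0
    rcases mul_eq_zero.mp h0 with h | h
    · exact hK h
    have him := congrArg Complex.im (sub_eq_zero.mp h)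
    simp [hE, Complex.sub_im, Complex.mul_im] at him
    rcases him with h | h
    · exact ht h
    · exact hu (by simpa using h)
  · -- eigenvector equation
    ext x
    have hw : walkOp σ Φ x = 2 * ((a ((σ x).1) : ℂ) / Real.sqrt d) - Φ (σ x) := by
      show coinOp Φ (σ x) = _
      rw [coinOp]
      have hsa : (∑ u : V, ⟪psiState V d u, Φ⟫_ℂ • psiState V d u) (σ x)
          = ∑ u : V, (⟪psiState V d u, Φ⟫_ℂ • psiState V d u) (σ x) :=
        by rw [WithLp.ofLp_sum, Finset.sum_apply]
      have happ : ((2 : ℂ) • (∑ u : V, ⟪psiState V d u, Φ⟫_ℂ • psiState V d u) - Φ) (σ x)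
          = (2 : ℂ) * (∑ u : V, ⟪psiState V d u, Φ⟫_ℂ * psiState V d u (σ x)) - Φ (σ x) := by
        rw [PiLp.sub_apply, PiLp.smul_apply, hsa]
        simp only [PiLp.smul_apply, smul_eq_mul]
      rw [happ]
      congr 1
      simp only [hinner]
      rw [Finset.sum_eq_single ((σ x).1)]
      · simp [psiState]; ring
      · intro v _ hv
        simp [psiState, (Ne.symm hv)]
      · simp
    have hsmul : (Complex.exp (t * Complex.I) • Φ) x
        = Complex.exp (t * Complex.I) * Φ x := rfl
    rw [hw, hsmul, hΦx, hΦx, hσ, heE, hKdef, hE]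
    exact walk_aux2 _ _ _ _ _ hs htC hpyth

/-- (Converse) If `a : V → ℝ` is a nonzero eigenvector of the normalized
adjacency matrix with eigenvalue `cos φ`, `0 < φ < π`, and `σ` has no fixed points, then there
are nonzero eigenvectors of `W` with eigenvalues `e^{iφ}` and `e^{−iφ}` whose overlaps with the
coin states `ψ_u` are the `a_u`. -/
theorem adjacency_eigenvector_gives_walk_eigenvectors
    {V : Type*} [Fintype V] [DecidableEq V] [Nonempty V] {d : ℕ} (hd : 1 ≤ d)
    (σ : V × Fin d → V × Fin d) (hσ : ∀ x, σ (σ x) = x) (hfix : ∀ x, σ x ≠ x)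
    (a : V → ℝ) (ha : a ≠ 0) (φ : ℝ) (hφ0 : 0 < φ) (hφπ : φ < Real.pi)
    (heig : ∀ u : V, ∑ v : V, adjEntry σ u v * a v = Real.cos φ * a u) :
    (∃ Φ : EuclideanSpace ℂ (V × Fin d), Φ ≠ 0 ∧
        walkOp σ Φ = Complex.exp (φ * Complex.I) • Φ ∧
        ∀ u : V, ⟪psiState V d u, Φ⟫_ℂ = (a u : ℂ)) ∧
    (∃ Φ' : EuclideanSpace ℂ (V × Fin d), Φ' ≠ 0 ∧
        walkOp σ Φ' = Complex.exp (-(φ * Complex.I)) • Φ' ∧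
        ∀ u : V, ⟪psiState V d u, Φ'⟫_ℂ = (a u : ℂ)) := by
  have hsin : Real.sin φ ≠ 0 := ne_of_gt (Real.sin_pos_of_pos_of_lt_pi hφ0 hφπ)
  constructor
  · exact walk_eig_aux hd σ hσ a ha φ hsin heig
  · have hsin' : Real.sin (-φ) ≠ 0 := by simpa using hsin
    have heig' : ∀ u : V, ∑ v : V, adjEntry σ u v * a v = Real.cos (-φ) * a u := by
      simpa [Real.cos_neg] using heig
    obtain ⟨Φ', h1, h2, h3⟩ := walk_eig_aux hd σ hσ a ha (-φ) hsin' heig'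
    refine ⟨Φ', h1, ?_, h3⟩
    convert h2 using 3
    push_cast
    ring
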